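/- Let T > 0, A > 0, κ ≥ 0, β ≥ 0 with κ + β > 0, B ∈ ℝ, let α₁, α₂, φ₁, φ₂ > 0, let Q̲ ≤ 0 ≤ Q̄ be integers with Q̲ < Q̄, and let δ̄ : [0, T] → ℝ be continuous. Then there exists a unique continuously differentiable function h = (h_{Q̲}, …, h_{Q̄}) : [0, T] → ℝ^{Q̄−Q̲+1} satisfying, for all t ∈ [0, T]: h_{Q̲}'(t) = (φ₁·𝟙_{Q̲ ≥ 0} + φ₂·𝟙_{Q̲ < 0})·Q̲², and for each q ∈ {Q̲+1, …, Q̄}, h_q'(t) = (φ₁·𝟙_{q ≥ 0} + φ₂·𝟙_{q < 0})·q² − sup_{δ ≥ B} A·exp(−(κ+β)·δ + β·δ̄(t))·(δ + h_{q−1}(t) − h_q(t)), with terminal conditions h_q(T) = −(α₁·𝟙_{q ≥ 0} + α₂·𝟙_{q < 0})·q² for all q ∈ {Q̲, …, Q̄}. -/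

import Mathlib

open Set Real

noncomputable def oGmax (γ B w : ℝ) : ℝ := max B (1 / γ - w)

/-- value of `sup_{δ ≥ B} exp(-γδ)(δ+w)` -/
noncomputable def oG (γ B w : ℝ) : ℝ :=
  Real.exp (-γ * oGmax γ B w) * (oGmax γ B w + w)

lemma oG_ub {γ B w δ : ℝ} (hγ : 0 < γ) (hδ : B ≤ δ) :
    Real.exp (-γ * δ) * (δ + w) ≤ oG γ B w := by
  rcases le_or_gt (1 / γ - w) B with h | h
  · have hmax : oGmax γ B w = B := max_eq_left h
    rw [oG, hmax]
    have hBw : 1 ≤ γ * (B + w) := by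
      have h1 : 1 / γ ≤ B + w := by linarith
      rw [div_le_iff₀ hγ] at h1; linarith [h1]
    have hBw0 : 0 < B + w := by nlinarith
    have hE : 1 + γ * (δ - B) ≤ Real.exp (γ * (δ - B)) := by
      have := Real.add_one_le_exp (γ * (δ - B)); linarith
    have h1 : δ + w ≤ Real.exp (γ * (δ - B)) * (B + w) := by nlinarith
    calc Real.exp (-γ * δ) * (δ + w)
        ≤ Real.exp (-γ * δ) * (Real.exp (γ * (δ - B)) * (B + w)) :=
          mul_le_mul_of_nonneg_left h1 (Real.exp_nonneg _)
      _ = Real.exp (-γ * B) * (B + w) := by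
          rw [← mul_assoc, ← Real.exp_add]
          congr 2
          ring
  · have hmax : oGmax γ B w = 1 / γ - w := max_eq_right h.le
    rw [oG, hmax]
    have hu : γ * (δ + w) ≤ Real.exp (γ * (δ + w) - 1) := by
      have := Real.add_one_le_exp (γ * (δ + w) - 1); linarith
    have h1 : δ + w ≤ Real.exp (γ * (δ + w) - 1) / γ := by
      rw [le_div_iff₀ hγ]; linarith [hu]
    calc Real.exp (-γ * δ) * (δ + w)
        ≤ Real.exp (-γ * δ) * (Real.exp (γ * (δ + w) - 1) / γ) :=
          mul_le_mul_of_nonneg_left h1 (Real.exp_nonneg _)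
      _ = Real.exp (-γ * (1 / γ - w)) * (1 / γ - w + w) := by
          rw [mul_div_assoc', ← Real.exp_add]
          have h2 : -γ * δ + (γ * (δ + w) - 1) = γ * w - 1 := by ring
          have h3 : -γ * (1 / γ - w) = γ * w - 1 := by
            field_simp; ring
          rw [h2, h3]
          ring

lemma oG_mono {γ B : ℝ} (hγ : 0 < γ) {a b : ℝ} (hab : a ≤ b) : oG γ B a ≤ oG γ B b := by
  calc oG γ B a = Real.exp (-γ * oGmax γ B a) * (oGmax γ B a + a) := rfl
    _ ≤ Real.exp (-γ * oGmax γ B a) * (oGmax γ B a + b) :=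
        mul_le_mul_of_nonneg_left (by linarith) (Real.exp_nonneg _)
    _ ≤ oG γ B b := oG_ub hγ (le_max_left _ _)

lemma oG_sub_le {γ B : ℝ} (hγ : 0 < γ) {a b : ℝ} (hab : a ≤ b) :
    oG γ B b - oG γ B a ≤ Real.exp (-γ * B) * (b - a) := by
  have hmB : B ≤ oGmax γ B b := le_max_left _ _
  have h1 : oG γ B b = Real.exp (-γ * oGmax γ B b) * (oGmax γ B b + a)
      + Real.exp (-γ * oGmax γ B b) * (b - a) := by rw [oG]; ring
  have h2 : Real.exp (-γ * oGmax γ B b) * (oGmax γ B b + a) ≤ oG γ B a := oG_ub hγ hmB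
  have h3 : Real.exp (-γ * oGmax γ B b) * (b - a) ≤ Real.exp (-γ * B) * (b - a) := by
    apply mul_le_mul_of_nonneg_right _ (by linarith)
    exact Real.exp_le_exp.mpr (by nlinarith)
  linarith

lemma oG_lip {γ B : ℝ} (hγ : 0 < γ) (a b : ℝ) :
    |oG γ B a - oG γ B b| ≤ Real.exp (-γ * B) * |a - b| := by
  rcases le_total a b with hab | hab
  · rw [abs_of_nonpos (by linarith [oG_mono (B := B) hγ hab]), abs_of_nonpos (by linarith)]
    have := oG_sub_le (B := B) hγ hab; linarith
  · rw [abs_of_nonneg (by linarith [oG_mono (B := B) hγ hab]), abs_of_nonneg (by linarith)]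
    have := oG_sub_le (B := B) hγ hab; linarith

lemma oG_continuous {γ B : ℝ} (hγ : 0 < γ) : Continuous (oG γ B) := by
  apply LipschitzWith.continuous (K := (Real.exp (-γ * B)).toNNReal)
  apply LipschitzWith.of_dist_le_mul
  intro x y
  rw [Real.dist_eq, Real.dist_eq, Real.coe_toNNReal _ (Real.exp_nonneg _)]
  exact oG_lip hγ x y

lemma oG_sSup {A γ B c' w : ℝ} (hA : 0 < A) (hγ : 0 < γ) :
    sSup ((fun δ => A * Real.exp (-γ * δ + c') * (δ + w)) '' Ici B)
      = A * Real.exp c' * oG γ B w := by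
  have hfun : (fun δ => A * Real.exp (-γ * δ + c') * (δ + w))
      = fun δ => A * Real.exp c' * (Real.exp (-γ * δ) * (δ + w)) := by
    funext δ; rw [Real.exp_add]; ring
  rw [hfun]
  apply IsGreatest.csSup_eq
  constructor
  · exact ⟨oGmax γ B w, mem_Ici.mpr (le_max_left _ _), rfl⟩
  · rintro x ⟨δ, hδ, rfl⟩
    exact mul_le_mul_of_nonneg_left (oG_ub hγ hδ) (by positivity)

lemma my_hasDerivWithinAt_singleton (y : ℝ → ℝ) (c x : ℝ) : HasDerivWithinAt y c {x} x := by
  simp only [HasDerivWithinAt, HasFDerivWithinAt, nhdsWithin_singleton, HasDerivAtFilter,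
    hasFDerivAtFilter_iff_isLittleO, Asymptotics.isLittleO_pure, sub_self,
    ContinuousLinearMap.smulRight_apply, ContinuousLinearMap.one_apply, smul_zero, sub_zero,
    zero_smul, Filter.prod_pure_pure, map_zero]

/-- Global (in a compact interval) existence for an ODE with a globally Lipschitz,
separately continuous vector field. -/
lemma exists_forward_solution {T : ℝ} (hT : 0 ≤ T) (f : ℝ → ℝ → ℝ) (L : NNReal)
    (hL : 0 < (L : ℝ)) (hlip : ∀ t, LipschitzWith L (f t))
    (hcont : ∀ x, Continuous fun t => f t x) (x₀ : ℝ) :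
    ∃ y : ℝ → ℝ, y 0 = x₀ ∧ ∀ t ∈ Icc 0 T, HasDerivWithinAt y (f t (y t)) (Icc 0 T) t := by
  -- bound on `f t x₀` for `t ∈ [0, T]`
  obtain ⟨D₀, hD₀⟩ : ∃ C, ∀ t ∈ Icc (0:ℝ) T, ‖f t x₀‖ ≤ C :=
    (isCompact_Icc).exists_bound_of_continuousOn (hcont x₀).continuousOn
  set D : ℝ := max D₀ 0 with hD_def
  have hD : ∀ t ∈ Icc (0:ℝ) T, |f t x₀| ≤ D := fun t ht => (hD₀ t ht).trans (le_max_left _ _)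
  have hD0 : 0 ≤ D := le_max_right _ _
  -- a priori radius from Grönwall
  set R₀ : ℝ := gronwallBound 0 L D T with hR₀_def
  have hR₀0 : 0 ≤ R₀ := by
    rw [hR₀_def, gronwallBound_of_K_ne_0 (ne_of_gt hL)]
    have h1 : (1:ℝ) ≤ Real.exp (L * T) := Real.one_le_exp (by positivity)
    have h2 : (0:ℝ) ≤ D / L := by positivity
    nlinarith
  have hgb_mono : ∀ x, 0 ≤ x → x ≤ T → gronwallBound 0 L D x ≤ R₀ := by
    intro x hx0 hxT
    rw [hR₀_def, gronwallBound_of_K_ne_0 (ne_of_gt hL)]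
    dsimp only
    have h1 : Real.exp (L * x) ≤ Real.exp (L * T) :=
      Real.exp_le_exp.mpr (by nlinarith)
    have h2 : (0:ℝ) ≤ D / L := by positivity
    nlinarith
  set C : ℝ := D + L * (R₀ + 1) with hC_def
  have hC : 0 < C := by nlinarith
  set ε : ℝ := 1 / C with hε_def
  have hε : 0 < ε := by positivity
  -- piece-wise construction
  have key : ∀ n : ℕ, ∃ y : ℝ → ℝ, y 0 = x₀ ∧
      ∀ t ∈ Icc 0 (min (n * ε) T),
        HasDerivWithinAt y (f t (y t)) (Icc 0 (min (n * ε) T)) t := by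
    intro n
    induction n with
    | zero =>
      refine ⟨fun _ => x₀, rfl, ?_⟩
      have h0 : min ((0:ℕ) * ε) T = 0 := by
        simp [min_eq_left hT]
      rw [h0]
      intro t ht
      rw [Icc_self] at ht ⊢
      rcases ht with rfl
      exact my_hasDerivWithinAt_singleton _ _ _
    | succ n ih =>
      obtain ⟨y, hy0, hy⟩ := ih
      set b : ℝ := min (n * ε) T with hb_def
      set b' : ℝ := min ((n + 1 : ℕ) * ε) T with hb'_def
      have hb0 : 0 ≤ b := le_min (by positivity) hT
      have hbb' : b ≤ b' := min_le_min (by push_cast; nlinarith [hε]) le_rfl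
      have hb'T : b' ≤ T := min_le_right _ _
      have hbT : b ≤ T := min_le_right _ _
      have hstep : b' - b ≤ ε := by
        rcases le_or_gt T (n * ε) with h | h
        · have e1 : b = T := min_eq_right h
          have e2 : b' = T := min_eq_right (by push_cast; nlinarith [hε])
          rw [e1, e2, sub_self]
          exact hε.le
        · have hbe : b = n * ε := min_eq_left h.le
          have : b' ≤ n * ε + ε := (min_le_left _ _).trans (by push_cast; nlinarith)
          linarith
      -- continuity of y on [0, b]
      have hycont : ContinuousOn y (Icc 0 b) := fun t ht =>
        (hy t ht).continuousWithinAt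
      -- Grönwall a priori bound
      have hbdd : ∀ t ∈ Icc 0 b, |y t - x₀| ≤ R₀ := by
        intro t ht
        have := norm_le_gronwallBound_of_norm_deriv_right_le (E := ℝ)
          (f := fun s => y s - x₀) (f' := fun s => f s (y s)) (δ := 0) (K := L) (ε := D)
          (a := 0) (b := b)
          (hycont.sub continuousOn_const)
          (fun s hs => by
            have hmem : Icc (0:ℝ) b ∈ nhdsWithin s (Ici s) := by
              rw [mem_nhdsWithin]
              exact ⟨Iio b, isOpen_Iio, hs.2, fun x hx => ⟨hs.1.trans hx.2, hx.1.le⟩⟩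
            exact ((hy s ⟨hs.1, hs.2.le⟩).mono_of_mem_nhdsWithin hmem).sub_const x₀)
          (by simp [hy0])
          (fun s hs => by
            have h1 : |f s (y s) - f s x₀| ≤ L * |y s - x₀| := by
              have := (hlip s).dist_le_mul (y s) x₀
              rwa [Real.dist_eq, Real.dist_eq] at this
            have h2 : |f s x₀| ≤ D := hD s ⟨hs.1, hs.2.le.trans hbT⟩
            calc ‖f s (y s)‖ = |f s (y s)| := rfl
              _ ≤ |f s (y s) - f s x₀| + |f s x₀| := by
                  have := abs_sub_abs_le_abs_sub (f s (y s)) (f s x₀)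
                  have := abs_add_le (f s (y s) - f s x₀) (f s x₀)
                  calc |f s (y s)| = |(f s (y s) - f s x₀) + f s x₀| := by ring_nf
                    _ ≤ _ := abs_add_le _ _
              _ ≤ L * ‖y s - x₀‖ + D := by
                  exact add_le_add h1 h2)
          t ht
        calc |y t - x₀| = ‖y t - x₀‖ := rfl
          _ ≤ gronwallBound 0 L D (t - 0) := this
          _ ≤ R₀ := by rw [sub_zero]; exact hgb_mono t ht.1 (ht.2.trans hbT)
      rcases le_or_gt T b with hTb | hTb
      · -- already done: b = b' = T
        have hbeq : b = T := le_antisymm hbT hTb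
        have hb'eq : b' = T := le_antisymm hb'T (hbeq ▸ hbb')
        rw [hb'eq, ← hbeq]
        exact ⟨y, hy0, hy⟩
      · -- extend by Picard-Lindelöf on [b, b']
        set xc : ℝ := y b with hxc_def
        have hxcb : |xc - x₀| ≤ R₀ := hbdd b ⟨hb0, le_rfl⟩
        have hpl : IsPicardLindelof f (tmin := b) (tmax := b') ⟨b, le_rfl, hbb'⟩ xc 1 0
            C.toNNReal L :=
          { lipschitzOnWith := fun t _ => (hlip t).lipschitzOnWith
            continuousOn := fun x _ => (hcont x).continuousOn
            norm_le := fun t ht x hx => by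
              rw [Real.coe_toNNReal _ hC.le]
              have hxx₀ : |x - x₀| ≤ R₀ + 1 := by
                have h1 : |x - xc| ≤ 1 := by
                  have := mem_closedBall_iff_norm.mp hx
                  simpa [Real.norm_eq_abs] using this
                calc |x - x₀| = |(x - xc) + (xc - x₀)| := by ring_nf
                  _ ≤ |x - xc| + |xc - x₀| := abs_add_le _ _
                  _ ≤ R₀ + 1 := by linarith
              have h2 : |f t x - f t x₀| ≤ L * |x - x₀| := by
                have := (hlip t).dist_le_mul x x₀
                rwa [Real.dist_eq, Real.dist_eq] at this
              have h3 : |f t x₀| ≤ D := hD t ⟨hb0.trans ht.1, ht.2.trans hb'T⟩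
              have h4 : (L : ℝ) * |x - x₀| ≤ L * (R₀ + 1) :=
                mul_le_mul_of_nonneg_left hxx₀ (by positivity)
              calc ‖f t x‖ = |f t x| := rfl
                _ = |(f t x - f t x₀) + f t x₀| := by ring_nf
                _ ≤ |f t x - f t x₀| + |f t x₀| := abs_add_le _ _
                _ ≤ C := by rw [hC_def]; linarith
            mul_max_le := by
              simp only [NNReal.coe_one, NNReal.coe_zero, sub_zero, Real.coe_toNNReal _ hC.le]
              have : max (b' - b) (b - b) = b' - b := by
                rw [sub_self]; exact max_eq_left (by linarith)
              rw [this]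
              calc C * (b' - b) ≤ C * ε := mul_le_mul_of_nonneg_left hstep hC.le
                _ = 1 := by rw [hε_def]; field_simp }
        obtain ⟨y₂, hy₂0', hy₂⟩ := hpl.exists_eq_forall_mem_Icc_hasDerivWithinAt₀
        have hy₂0 : y₂ b = xc := hy₂0'
        refine ⟨fun t => if t ≤ b then y t else y₂ t, by simp [hb0, hy0], ?_⟩
        intro t ht
        dsimp only
        rcases lt_trichotomy t b with h | h | h
        · -- t < b
          have hmem : Icc (0:ℝ) b ∈ nhdsWithin t (Icc 0 b') := by
            rw [mem_nhdsWithin]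
            exact ⟨Iio b, isOpen_Iio, h, fun x hx => ⟨hx.2.1, hx.1.le⟩⟩
          have h1 : HasDerivWithinAt y (f t (y t)) (Icc 0 b') t :=
            (hy t ⟨ht.1, h.le⟩).mono_of_mem_nhdsWithin hmem
          have heq : (fun s => if s ≤ b then y s else y₂ s) =ᶠ[nhdsWithin t (Icc 0 b')] y := by
            filter_upwards [nhdsWithin_le_nhds (Iio_mem_nhds h)] with x hx
            exact if_pos (le_of_lt hx)
          have hval : (if t ≤ b then y t else y₂ t) = y t := if_pos h.le
          rw [hval]
          exact h1.congr_of_eventuallyEq heq (if_pos h.le)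
        · -- t = b
          have hYt : (if t ≤ b then y t else y₂ t) = y t := if_pos h.le
          have hy₂t : y₂ t = y t := by rw [h, hy₂0]
          have hleft : HasDerivWithinAt (fun s => if s ≤ b then y s else y₂ s)
              (f t (y t)) (Icc 0 b) t :=
            (hy t ⟨ht.1, h.le⟩).congr (fun x hx => if_pos hx.2) hYt
          have hright : HasDerivWithinAt (fun s => if s ≤ b then y s else y₂ s)
              (f t (y t)) (Icc b b') t := by
            have h2 := hy₂ t ⟨h.ge, ht.2⟩
            rw [hy₂t] at h2
            apply h2.congr
            · intro x hx
              rcases le_or_gt x b with hxb | hxb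
              · have hxb' : x = b := le_antisymm hxb hx.1
                rw [hxb', if_pos le_rfl, hy₂0]
              · exact if_neg (not_le.mpr hxb)
            · rw [hYt, hy₂t]
          have hun := hleft.union hright
          rw [Icc_union_Icc_eq_Icc hb0 hbb'] at hun
          rw [hYt]
          exact hun
        · -- b < t
          have hmem : Icc b b' ∈ nhdsWithin t (Icc 0 b') := by
            rw [mem_nhdsWithin]
            exact ⟨Ioi b, isOpen_Ioi, h, fun x hx => ⟨hx.1.le, hx.2.2⟩⟩
          have h1 : HasDerivWithinAt y₂ (f t (y₂ t)) (Icc 0 b') t :=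
            (hy₂ t ⟨h.le, ht.2⟩).mono_of_mem_nhdsWithin hmem
          have hval : (if t ≤ b then y t else y₂ t) = y₂ t := if_neg (not_le.mpr h)
          rw [hval]
          apply h1.congr_of_eventuallyEq
          · filter_upwards [nhdsWithin_le_nhds (Ioi_mem_nhds h)] with x hx
            exact if_neg (not_le.mpr hx)
          · exact if_neg (not_le.mpr h)
  -- choose n large enough
  obtain ⟨n, hn⟩ := exists_nat_ge (T / ε)
  have hnT : T ≤ n * ε := by
    rw [div_le_iff₀ hε] at hn; linarith
  obtain ⟨y, hy0, hy⟩ := key n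
  have : min ((n : ℝ) * ε) T = T := min_eq_right hnT
  rw [this] at hy
  exact ⟨y, hy0, hy⟩

/-- Global existence with a terminal condition at `T`. -/
lemma exists_terminal_solution {T : ℝ} (hT : 0 ≤ T) (f : ℝ → ℝ → ℝ) (L : NNReal)
    (hL : 0 < (L : ℝ)) (hlip : ∀ t, LipschitzWith L (f t))
    (hcont : ∀ x, Continuous fun t => f t x) (x₀ : ℝ) :
    ∃ y : ℝ → ℝ, y T = x₀ ∧ ∀ t ∈ Icc 0 T, HasDerivWithinAt y (f t (y t)) (Icc 0 T) t := by
  obtain ⟨z, hz0, hz⟩ := exists_forward_solution hT (fun t x => -f (T - t) x) L hL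
    (fun t => fun x y => by simpa [edist_neg_neg] using (hlip (T - t)) x y)
    (fun x => ((hcont x).comp (continuous_const.sub continuous_id)).neg) x₀
  refine ⟨fun t => z (T - t), by simpa using hz0, ?_⟩
  intro t ht
  have hTt : T - t ∈ Icc 0 T := ⟨by linarith [ht.2], by linarith [ht.1]⟩
  have h1 := hz (T - t) hTt
  have h2 : HasDerivWithinAt (fun s : ℝ => T - s) (-1) (Icc 0 T) t :=
    ((hasDerivAt_id t).const_sub T).hasDerivWithinAt
  have hmap : MapsTo (fun s : ℝ => T - s) (Icc 0 T) (Icc 0 T) := fun s hs => by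
    simp only [mem_Icc] at hs ⊢
    constructor <;> linarith [hs.1, hs.2]
  have h3 : HasDerivWithinAt (fun s => z (T - s)) (-f (T - (T - t)) (z (T - t)) * -1)
      (Icc 0 T) t := HasDerivWithinAt.comp t h1 h2 hmap
  convert h3 using 1
  simp only [Function.comp]
  ring_nf

/-- Uniqueness for an ODE on `[0,T]` with terminal condition at `T`. -/
lemma terminal_solution_unique {T : ℝ} (f : ℝ → ℝ → ℝ) (L : NNReal)
    (hlip : ∀ t, LipschitzWith L (f t)) (y₁ y₂ : ℝ → ℝ)
    (hd₁ : ∀ t ∈ Icc 0 T, HasDerivWithinAt y₁ (f t (y₁ t)) (Icc 0 T) t)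
    (hd₂ : ∀ t ∈ Icc 0 T, HasDerivWithinAt y₂ (f t (y₂ t)) (Icc 0 T) t)
    (hterm : y₁ T = y₂ T) : ∀ t ∈ Icc 0 T, y₁ t = y₂ t := by
  have conv : ∀ (y : ℝ → ℝ), (∀ t ∈ Icc 0 T, HasDerivWithinAt y (f t (y t)) (Icc 0 T) t) →
      ∀ t ∈ Ioc (0:ℝ) T, HasDerivWithinAt y (f t (y t)) (Iic t) t := by
    intro y hy t ht
    have hmem : Icc (0:ℝ) T ∈ nhdsWithin t (Iic t) := by
      rw [mem_nhdsWithin]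
      exact ⟨Ioi 0, isOpen_Ioi, ht.1, fun x hx => ⟨hx.1.le, hx.2.trans ht.2⟩⟩
    exact (hy t ⟨ht.1.le, ht.2⟩).mono_of_mem_nhdsWithin hmem
  exact ODE_solution_unique_of_mem_Icc_left
    (fun t _ => (hlip t).lipschitzOnWith (s := univ))
    (fun t ht => (hd₁ t ht).continuousWithinAt)
    (conv y₁ hd₁) (fun _ _ => trivial)
    (fun t ht => (hd₂ t ht).continuousWithinAt)
    (conv y₂ hd₂) (fun _ _ => trivial) hterm

lemma level_exists {T A κ β B : ℝ} {δbar : ℝ → ℝ} (hT : 0 < T) (hA : 0 < A) (hβ : 0 ≤ β)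
    (hκβ : 0 < κ + β) (hδbar : ContinuousOn δbar (Icc 0 T))
    (c v : ℝ) (z : ℝ → ℝ) (hz : ContinuousOn z (Icc 0 T)) :
    ∃ g : ℝ → ℝ, g T = v ∧ ContinuousOn g (Icc 0 T) ∧
      ∀ t ∈ Icc 0 T, HasDerivWithinAt g
        (c - sSup ((fun δ => A * Real.exp (-(κ + β) * δ + β * δbar t) * (δ + z t - g t))
          '' Ici B))
        (Icc 0 T) t := by
  set proj : ℝ → ℝ := fun t => max 0 (min t T) with hproj_def
  have hproj_cont : Continuous proj := continuous_const.max (continuous_id.min continuous_const)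
  have hproj_mem : ∀ t, proj t ∈ Icc 0 T := fun t =>
    ⟨le_max_left _ _, max_le hT.le (min_le_right _ _)⟩
  have hproj_id : ∀ t ∈ Icc (0:ℝ) T, proj t = t := fun t ht => by
    rw [hproj_def]; dsimp only; rw [min_eq_left ht.2, max_eq_right ht.1]
  obtain ⟨M₀, hM₀⟩ : ∃ M, ∀ t ∈ Icc (0:ℝ) T, ‖δbar t‖ ≤ M :=
    isCompact_Icc.exists_bound_of_continuousOn hδbar
  have hM : ∀ t ∈ Icc (0:ℝ) T, δbar t ≤ M₀ := fun t ht =>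
    (le_abs_self _).trans (hM₀ t ht)
  set Lr : ℝ := A * Real.exp (β * M₀) * Real.exp (-(κ + β) * B) with hLr_def
  have hLr : 0 < Lr := by positivity
  set L : NNReal := Lr.toNNReal with hL_def
  have hLcoe : (L : ℝ) = Lr := Real.coe_toNNReal _ hLr.le
  set F : ℝ → ℝ → ℝ :=
    fun t x => c - A * Real.exp (β * δbar (proj t)) * oG (κ + β) B (z (proj t) - x)
    with hF_def
  have hlip : ∀ t, LipschitzWith L (F t) := by
    intro t
    apply LipschitzWith.of_dist_le_mul
    intro x y
    rw [Real.dist_eq, Real.dist_eq, hLcoe]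
    have h1 : F t x - F t y = A * Real.exp (β * δbar (proj t)) *
        (oG (κ + β) B (z (proj t) - y) - oG (κ + β) B (z (proj t) - x)) := by
      rw [hF_def]; ring
    have h2 : |F t x - F t y| = A * Real.exp (β * δbar (proj t)) *
        |oG (κ + β) B (z (proj t) - y) - oG (κ + β) B (z (proj t) - x)| := by
      rw [h1, abs_mul, abs_of_nonneg (by positivity)]
    have h3 : |oG (κ + β) B (z (proj t) - y) - oG (κ + β) B (z (proj t) - x)|
        ≤ Real.exp (-(κ + β) * B) * |x - y| := by
      have := oG_lip (B := B) hκβ (z (proj t) - y) (z (proj t) - x)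
      have he : |z (proj t) - y - (z (proj t) - x)| = |x - y| := by
        rw [show z (proj t) - y - (z (proj t) - x) = x - y by ring]
      rwa [he] at this
    have h4 : A * Real.exp (β * δbar (proj t)) ≤ A * Real.exp (β * M₀) := by
      apply mul_le_mul_of_nonneg_left _ hA.le
      exact Real.exp_le_exp.mpr (mul_le_mul_of_nonneg_left (hM _ (hproj_mem t)) hβ)
    calc |F t x - F t y|
        ≤ A * Real.exp (β * δbar (proj t)) * (Real.exp (-(κ + β) * B) * |x - y|) := by
          rw [h2]; exact mul_le_mul_of_nonneg_left h3 (by positivity)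
      _ ≤ A * Real.exp (β * M₀) * (Real.exp (-(κ + β) * B) * |x - y|) :=
          mul_le_mul_of_nonneg_right h4 (by positivity)
      _ = Lr * |x - y| := by rw [hLr_def]; ring
  have hcont : ∀ x, Continuous fun t => F t x := by
    intro x
    rw [hF_def]
    apply continuous_const.sub
    apply Continuous.mul
    · exact continuous_const.mul
        (Real.continuous_exp.comp (continuous_const.mul
          (hδbar.comp_continuous hproj_cont hproj_mem)))
    · exact (oG_continuous hκβ).comp
        ((hz.comp_continuous hproj_cont hproj_mem).sub continuous_const)
  obtain ⟨g, hgT, hg⟩ := exists_terminal_solution hT.le F L (by rw [hLcoe]; exact hLr)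
    hlip hcont v
  refine ⟨g, hgT, fun t ht => (hg t ht).continuousWithinAt, ?_⟩
  intro t ht
  have h1 := hg t ht
  have h2 : F t (g t) = c - sSup ((fun δ => A * Real.exp (-(κ + β) * δ + β * δbar t) *
      (δ + z t - g t)) '' Ici B) := by
    have himg : (fun δ => A * Real.exp (-(κ + β) * δ + β * δbar t) * (δ + z t - g t))
        = fun δ => A * Real.exp (-(κ + β) * δ + β * δbar t) * (δ + (z t - g t)) := by
      funext δ; ring
    rw [himg, oG_sSup hA hκβ, hF_def]
    dsimp only
    rw [hproj_id t ht]
  rw [← h2]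
  exact h1

lemma chain_exists {T A κ β B α₁ α₂ φ₁ φ₂ : ℝ} {Qlow : ℤ} {δbar : ℝ → ℝ}
    (hT : 0 < T) (hA : 0 < A) (hβ : 0 ≤ β) (hκβ : 0 < κ + β)
    (hδbar : ContinuousOn δbar (Icc 0 T)) (m : ℕ) :
    ∃ H : ℕ → ℝ → ℝ,
      (H 0 = fun t => -((if 0 ≤ Qlow then α₁ else α₂) * (Qlow : ℝ) ^ 2)
        + (if 0 ≤ Qlow then φ₁ else φ₂) * (Qlow : ℝ) ^ 2 * (t - T)) ∧
      ∀ k : ℕ, k < m → ContinuousOn (H (k + 1)) (Icc 0 T) ∧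
        H (k + 1) T = -((if 0 ≤ (Qlow + k + 1 : ℤ) then α₁ else α₂)
          * ((Qlow + k + 1 : ℤ) : ℝ) ^ 2) ∧
        ∀ t ∈ Icc 0 T, HasDerivWithinAt (H (k + 1))
          ((if 0 ≤ (Qlow + k + 1 : ℤ) then φ₁ else φ₂) * ((Qlow + k + 1 : ℤ) : ℝ) ^ 2
            - sSup ((fun δ => A * Real.exp (-(κ + β) * δ + β * δbar t)
                * (δ + H k t - H (k + 1) t)) '' Ici B))
          (Icc 0 T) t := by
  induction m with
  | zero =>
    exact ⟨fun _ => fun t => -((if 0 ≤ Qlow then α₁ else α₂) * (Qlow : ℝ) ^ 2)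
        + (if 0 ≤ Qlow then φ₁ else φ₂) * (Qlow : ℝ) ^ 2 * (t - T), rfl,
      fun k hk => absurd hk (Nat.not_lt_zero k)⟩
  | succ m ih =>
    obtain ⟨H, hH0, hH⟩ := ih
    have hHmc : ContinuousOn (H m) (Icc 0 T) := by
      cases m with
      | zero =>
        rw [hH0]
        exact (continuousOn_const.add ((continuousOn_const.mul
          (continuousOn_id.sub continuousOn_const))))
      | succ k => exact (hH k (Nat.lt_succ_self k)).1
    obtain ⟨g, hgT, hgc, hgd⟩ := level_exists (B := B) hT hA hβ hκβ hδbar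
      ((if 0 ≤ (Qlow + m + 1 : ℤ) then φ₁ else φ₂) * ((Qlow + m + 1 : ℤ) : ℝ) ^ 2)
      (-((if 0 ≤ (Qlow + m + 1 : ℤ) then α₁ else α₂) * ((Qlow + m + 1 : ℤ) : ℝ) ^ 2))
      (H m) hHmc
    refine ⟨Function.update H (m + 1) g, ?_, ?_⟩
    · rw [Function.update_of_ne (by omega) _ _]
      exact hH0
    · intro k hk
      rcases Nat.lt_or_ge k m with hkm | hkm
      · have e1 : Function.update H (m + 1) g (k + 1) = H (k + 1) :=
          Function.update_of_ne (by omega) _ _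
        have e2 : Function.update H (m + 1) g k = H k :=
          Function.update_of_ne (by omega) _ _
        rw [e1, e2]
        exact hH k hkm
      · have hkm' : k = m := by omega
        subst hkm'
        have e1 : Function.update H (k + 1) g (k + 1) = g :=
          Function.update_self _ _ _
        have e2 : Function.update H (k + 1) g k = H k :=
          Function.update_of_ne (by omega) _ _
        rw [e1, e2]
        exact ⟨hgc, hgT, hgd⟩


/-- `h : ℝ → ℤ → ℝ` solves the overselling HJB ODE system on `[0,T]`:
`h_{Q̲}'(t) = (φ₁·𝟙_{Q̲ ≥ 0} + φ₂·𝟙_{Q̲ < 0})·Q̲²`, for `Q̲ < q ≤ Q̄`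
`h_q'(t) = (φ₁·𝟙_{q ≥ 0} + φ₂·𝟙_{q < 0})·q²
  − sup_{δ ≥ B} A·exp(−(κ+β)·δ + β·δ̄(t))·(δ + h_{q−1}(t) − h_q(t))`,
with terminal conditions `h_q(T) = −(α₁·𝟙_{q ≥ 0} + α₂·𝟙_{q < 0})·q²`
for all `Q̲ ≤ q ≤ Q̄`. -/
def IsOversellHJBSolution (T A κ β B α₁ α₂ φ₁ φ₂ : ℝ) (Qlow Qbar : ℤ)
    (δbar : ℝ → ℝ) (h : ℝ → ℤ → ℝ) : Prop :=
  (∀ t ∈ Set.Icc (0 : ℝ) T,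
    HasDerivWithinAt (fun s => h s Qlow)
      ((if 0 ≤ Qlow then φ₁ else φ₂) * (Qlow : ℝ) ^ 2) (Set.Icc 0 T) t) ∧
  (∀ q : ℤ, Qlow < q → q ≤ Qbar → ∀ t ∈ Set.Icc (0 : ℝ) T,
    HasDerivWithinAt (fun s => h s q)
      ((if 0 ≤ q then φ₁ else φ₂) * (q : ℝ) ^ 2 -
        sSup ((fun δ => A * Real.exp (-(κ + β) * δ + β * δbar t) *
          (δ + h t (q - 1) - h t q)) '' Set.Ici B))
      (Set.Icc 0 T) t) ∧
  ∀ q : ℤ, Qlow ≤ q → q ≤ Qbar →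
    h T q = -((if 0 ≤ q then α₁ else α₂) * (q : ℝ) ^ 2)

/-- Existence and uniqueness for the HJB ODE system of the overselling
model: given a continuous mean quote `δ̄`, there is a unique continuously
differentiable solution `h = (h_{Q̲}, …, h_{Q̄})` on `[0, T]`. -/
theorem oversell_HJB_existence_uniqueness
    (T A κ β B α₁ α₂ φ₁ φ₂ : ℝ) (Qlow Qbar : ℤ)
    (hT : 0 < T) (hA : 0 < A) (hκ : 0 ≤ κ) (hβ : 0 ≤ β) (hκβ : 0 < κ + β)
    (hα₁ : 0 < α₁) (hα₂ : 0 < α₂) (hφ₁ : 0 < φ₁) (hφ₂ : 0 < φ₂)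
    (hQlow : Qlow ≤ 0) (hQbar : 0 ≤ Qbar) (hQ : Qlow < Qbar)
    (δbar : ℝ → ℝ) (hδbar : ContinuousOn δbar (Set.Icc 0 T)) :
    (∃ h : ℝ → ℤ → ℝ, IsOversellHJBSolution T A κ β B α₁ α₂ φ₁ φ₂ Qlow Qbar δbar h) ∧
    ∀ h₁ h₂ : ℝ → ℤ → ℝ,
      IsOversellHJBSolution T A κ β B α₁ α₂ φ₁ φ₂ Qlow Qbar δbar h₁ →
      IsOversellHJBSolution T A κ β B α₁ α₂ φ₁ φ₂ Qlow Qbar δbar h₂ →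
      ∀ t ∈ Set.Icc (0 : ℝ) T, ∀ q : ℤ, Qlow ≤ q → q ≤ Qbar → h₁ t q = h₂ t q := by
  constructor
  · -- existence
    obtain ⟨H, hH0, hH⟩ := chain_exists (A := A) (κ := κ) (β := β) (B := B)
      (α₁ := α₁) (α₂ := α₂) (φ₁ := φ₁) (φ₂ := φ₂) (Qlow := Qlow)
      hT hA hβ hκβ hδbar (Qbar - Qlow).toNat
    refine ⟨fun t q => H (q - Qlow).toNat t, ?_, ?_, ?_⟩
    · -- level Qlow
      intro t ht
      have e0 : (Qlow - Qlow).toNat = 0 := by omega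
      simp only [e0]
      rw [hH0]
      have : HasDerivAt (fun s : ℝ =>
          -((if 0 ≤ Qlow then α₁ else α₂) * (Qlow : ℝ) ^ 2)
            + (if 0 ≤ Qlow then φ₁ else φ₂) * (Qlow : ℝ) ^ 2 * (s - T))
          ((if 0 ≤ Qlow then φ₁ else φ₂) * (Qlow : ℝ) ^ 2) t := by
        have h' := (((hasDerivAt_id t).sub_const T).const_mul
          ((if 0 ≤ Qlow then φ₁ else φ₂) * (Qlow : ℝ) ^ 2)).const_add
          (-((if 0 ≤ Qlow then α₁ else α₂) * (Qlow : ℝ) ^ 2))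
        rw [mul_one] at h'
        exact h'
      exact this.hasDerivWithinAt
    · -- middle levels
      intro q hq1 hq2 t ht
      have hk : ((q - Qlow - 1).toNat : ℤ) = q - Qlow - 1 := Int.toNat_of_nonneg (by omega)
      set k : ℕ := (q - Qlow - 1).toNat with hk_def
      have hkn : k < (Qbar - Qlow).toNat := by omega
      have hq1' : (Qlow + (k : ℤ) + 1 : ℤ) = q := by omega
      have htn1 : (q - Qlow).toNat = k + 1 := by omega
      have htn2 : (q - 1 - Qlow).toNat = k := by omega
      obtain ⟨-, -, hd⟩ := hH k hkn
      have hd' := hd t ht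
      rw [hq1'] at hd'
      simp only [htn1, htn2]
      exact hd'
    · -- terminal conditions
      intro q hq1 hq2
      rcases eq_or_lt_of_le hq1 with rfl | hq1'
      · have e0 : (Qlow - Qlow).toNat = 0 := by omega
        simp only [e0]
        rw [hH0]
        simp
      · have hk : ((q - Qlow - 1).toNat : ℤ) = q - Qlow - 1 := Int.toNat_of_nonneg (by omega)
        set k : ℕ := (q - Qlow - 1).toNat with hk_def
        have hkn : k < (Qbar - Qlow).toNat := by omega
        have hq1'' : (Qlow + (k : ℤ) + 1 : ℤ) = q := by omega
        have htn1 : (q - Qlow).toNat = k + 1 := by omega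
        obtain ⟨-, hterm, -⟩ := hH k hkn
        rw [hq1''] at hterm
        simp only [htn1]
        exact hterm
  · -- uniqueness
    intro h₁ h₂ hs₁ hs₂ t ht q hq1 hq2
    obtain ⟨hd₁0, hd₁m, ht₁⟩ := hs₁
    obtain ⟨hd₂0, hd₂m, ht₂⟩ := hs₂
    set proj : ℝ → ℝ := fun s => max 0 (min s T) with hproj_def
    have hproj_mem : ∀ s, proj s ∈ Icc 0 T := fun s =>
      ⟨le_max_left _ _, max_le hT.le (min_le_right _ _)⟩
    have hproj_id : ∀ s ∈ Icc (0:ℝ) T, proj s = s := fun s hs => by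
      rw [hproj_def]; dsimp only; rw [min_eq_left hs.2, max_eq_right hs.1]
    obtain ⟨M₀, hM₀⟩ : ∃ M, ∀ s ∈ Icc (0:ℝ) T, ‖δbar s‖ ≤ M :=
      isCompact_Icc.exists_bound_of_continuousOn hδbar
    have hM : ∀ s ∈ Icc (0:ℝ) T, δbar s ≤ M₀ := fun s hs =>
      (le_abs_self _).trans (hM₀ s hs)
    set Lr : ℝ := A * Real.exp (β * M₀) * Real.exp (-(κ + β) * B) with hLr_def
    have hLr : 0 < Lr := by positivity
    set L : NNReal := Lr.toNNReal with hL_def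
    have hLcoe : (L : ℝ) = Lr := Real.coe_toNNReal _ hLr.le
    have main : ∀ q : ℤ, Qlow ≤ q → q ≤ Qbar → ∀ s ∈ Icc (0:ℝ) T, h₁ s q = h₂ s q := by
      refine Int.le_induction ?_ ?_
      · -- base: q = Qlow
        intro _
        exact terminal_solution_unique
          (fun _ _ => (if 0 ≤ Qlow then φ₁ else φ₂) * (Qlow : ℝ) ^ 2) 0
          (fun _ => LipschitzWith.const _)
          (fun u => h₁ u Qlow) (fun u => h₂ u Qlow) hd₁0 hd₂0
          (by show h₁ T Qlow = h₂ T Qlow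
              rw [ht₁ Qlow le_rfl (by omega), ht₂ Qlow le_rfl (by omega)])
      · -- step
        intro q hq IH hq2'
        have hqQ : q ≤ Qbar := by omega
        have IH' := IH hqQ
        set cq : ℝ := (if 0 ≤ q + 1 then φ₁ else φ₂) * ((q + 1 : ℤ) : ℝ) ^ 2 with hcq_def
        set v : ℝ → ℝ → ℝ := fun s x =>
          cq - A * Real.exp (β * δbar (proj s)) * oG (κ + β) B (h₁ (proj s) q - x)
          with hv_def
        have hlip : ∀ s, LipschitzWith L (v s) := by
          intro s
          apply LipschitzWith.of_dist_le_mul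
          intro x y
          rw [Real.dist_eq, Real.dist_eq, hLcoe]
          have h1 : v s x - v s y = A * Real.exp (β * δbar (proj s)) *
              (oG (κ + β) B (h₁ (proj s) q - y) - oG (κ + β) B (h₁ (proj s) q - x)) := by
            rw [hv_def]; ring
          have h2 : |v s x - v s y| = A * Real.exp (β * δbar (proj s)) *
              |oG (κ + β) B (h₁ (proj s) q - y) - oG (κ + β) B (h₁ (proj s) q - x)| := by
            rw [h1, abs_mul, abs_of_nonneg (by positivity)]
          have h3 : |oG (κ + β) B (h₁ (proj s) q - y) - oG (κ + β) B (h₁ (proj s) q - x)|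
              ≤ Real.exp (-(κ + β) * B) * |x - y| := by
            have := oG_lip (B := B) hκβ (h₁ (proj s) q - y) (h₁ (proj s) q - x)
            have he : |h₁ (proj s) q - y - (h₁ (proj s) q - x)| = |x - y| := by
              rw [show h₁ (proj s) q - y - (h₁ (proj s) q - x) = x - y by ring]
            rwa [he] at this
          have h4 : A * Real.exp (β * δbar (proj s)) ≤ A * Real.exp (β * M₀) :=
            mul_le_mul_of_nonneg_left
              (Real.exp_le_exp.mpr (mul_le_mul_of_nonneg_left (hM _ (hproj_mem s)) hβ)) hA.le
          calc |v s x - v s y|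
              ≤ A * Real.exp (β * δbar (proj s)) * (Real.exp (-(κ + β) * B) * |x - y|) := by
                rw [h2]; exact mul_le_mul_of_nonneg_left h3 (by positivity)
            _ ≤ A * Real.exp (β * M₀) * (Real.exp (-(κ + β) * B) * |x - y|) :=
                mul_le_mul_of_nonneg_right h4 (by positivity)
            _ = Lr * |x - y| := by rw [hLr_def]; ring
        have hder : ∀ hh : ℝ → ℤ → ℝ,
            (∀ s ∈ Icc (0:ℝ) T, HasDerivWithinAt (fun u => hh u (q + 1))
              (cq - sSup ((fun δ => A * Real.exp (-(κ + β) * δ + β * δbar s) *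
                (δ + hh s (q + 1 - 1) - hh s (q + 1))) '' Ici B)) (Icc 0 T) s) →
            (∀ s ∈ Icc (0:ℝ) T, hh s q = h₁ s q) →
            ∀ s ∈ Icc (0:ℝ) T, HasDerivWithinAt (fun u => hh u (q + 1))
              (v s (hh s (q + 1))) (Icc 0 T) s := by
          intro hh hD hEq s hs
          have h1 := hD s hs
          have hq11 : (q + 1 - 1 : ℤ) = q := by ring
          rw [hq11] at h1
          have himg : (fun δ => A * Real.exp (-(κ + β) * δ + β * δbar s)
              * (δ + hh s q - hh s (q + 1)))
              = fun δ => A * Real.exp (-(κ + β) * δ + β * δbar s)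
              * (δ + (h₁ s q - hh s (q + 1))) := by
            funext δ; rw [hEq s hs]; ring
          rw [himg, oG_sSup hA hκβ] at h1
          have h2 : v s (hh s (q + 1)) = cq - A * Real.exp (β * δbar s) *
              oG (κ + β) B (h₁ s q - hh s (q + 1)) := by
            rw [hv_def]; dsimp only; rw [hproj_id s hs]
          rw [h2]
          exact h1
        exact terminal_solution_unique v L hlip
          (fun u => h₁ u (q + 1)) (fun u => h₂ u (q + 1))
          (hder h₁ (hd₁m (q + 1) (by omega) hq2') (fun _ _ => rfl))
          (hder h₂ (hd₂m (q + 1) (by omega) hq2') (fun s hs => (IH' s hs).symm))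
          (by show h₁ T (q + 1) = h₂ T (q + 1)
              rw [ht₁ (q + 1) (by omega) hq2', ht₂ (q + 1) (by omega) hq2'])
    exact main q hq1 hq2 t ht
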